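/- Let d ≥ 2 and let w ∈ ℝ^d satisfy w(1) ≠ 0 and w(d) ≠ 0. Then the set of pairs (w*, γ) ∈ ℝ^{d-1} × [0, π) such that w(1) = w*(1) cos γ, w(j) = w*(j) cos γ - w*(j-1) sin γ for 2 ≤ j ≤ d-1, and w(d) = -w*(d-1) sin γ, is finite with cardinality at most 2d - 2. -/

import Mathlib

open Finset

noncomputable section

/-- Extend a `Fin d`-indexed vector to `ℕ` by zero. -/
def ext0 {d : ℕ} (u : Fin d → ℝ) : ℕ → ℝ := fun j => if h : j < d then u ⟨j, h⟩ else 0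

/-- Shifted (delayed by one) extension: value at `j` is `u (j-1)`, zero at `j = 0`. -/
def extm {d : ℕ} (u : Fin d → ℝ) : ℕ → ℝ := fun j => if j = 0 then 0 else ext0 u (j - 1)

/-- Linear convolution of `x ∈ ℝ^m` and `y ∈ ℝ^n`, a vector in `ℝ^{m+n-1}` (0-indexed). -/
def conv {m n : ℕ} (x : Fin m → ℝ) (y : Fin n → ℝ) : Fin (m + n - 1) → ℝ :=
  fun l => ∑ j : Fin m, ∑ k : Fin n, if (j : ℕ) + (k : ℕ) = (l : ℕ) then x j * y k else 0

/-- The quotient set `Q∼(w,d)` of decompositions `w = [w*,0;0,-w*][cos γ; sin γ]`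
with `γ ∈ [0,π)`, written entrywise. -/
def QuotSet (d : ℕ) (w : Fin d → ℝ) : Set ((Fin (d - 1) → ℝ) × ℝ) :=
  {p | p.2 ∈ Set.Ico 0 Real.pi ∧
    ∀ j < d, ext0 w j = ext0 p.1 j * Real.cos p.2 - extm p.1 j * Real.sin p.2}

section aux

variable {d : ℕ} {w : Fin d → ℝ} {p : (Fin (d - 1) → ℝ) × ℝ}

lemma aux_sin_ne (hd : 2 ≤ d) (hwd : ext0 w (d - 1) ≠ 0)
    (hp : p ∈ QuotSet d w) : Real.sin p.2 ≠ 0 := by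
  intro hs
  apply hwd
  have h := hp.2 (d - 1) (by omega)
  have h1 : ext0 p.1 (d - 1) = 0 := by
    unfold ext0; rw [dif_neg (by omega)]
  rw [h, hs, h1]; ring

lemma aux_cos_ne (hd : 2 ≤ d) (hw0 : ext0 w 0 ≠ 0) (hp : p ∈ QuotSet d w) : Real.cos p.2 ≠ 0 := by
  intro hc
  apply hw0
  have h := hp.2 0 (by omega)
  have h1 : extm p.1 0 = 0 := by unfold extm; simp
  rw [h, hc, h1]; ring

lemma aux_root (hp : p ∈ QuotSet d w) (hs : Real.sin p.2 ≠ 0) :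
    ∑ j ∈ range d, ext0 w j * (Real.cos p.2 / Real.sin p.2) ^ j = 0 := by
  set r := Real.cos p.2 / Real.sin p.2 with hr
  have hterm : ∀ j ∈ range d, ext0 w j * r ^ j =
      (fun j => extm p.1 j * r ^ j * Real.sin p.2) (j + 1) - (fun j => extm p.1 j * r ^ j * Real.sin p.2) j := by
    intro j hj
    have h := hp.2 j (mem_range.mp hj)
    have hext : extm p.1 (j + 1) = ext0 p.1 j := by simp [extm]
    simp only
    rw [h, hext, hr]
    field_simp
    have hsc : Real.sin p.2 * (Real.cos p.2 / Real.sin p.2) = Real.cos p.2 := mul_div_cancel₀ _ hs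
    linear_combination -(ext0 p.1 j * (Real.cos p.2 / Real.sin p.2) ^ j) * hsc
  rw [Finset.sum_congr rfl hterm,
    Finset.sum_range_sub (fun j => extm p.1 j * r ^ j * Real.sin p.2) d]
  have h1 : extm p.1 d = 0 := by
    unfold extm ext0
    rcases Nat.eq_zero_or_pos d with h | h
    · simp [h]
    · rw [if_neg (by omega), dif_neg (by omega)]
  have h0 : extm p.1 0 = 0 := by unfold extm; simp
  simp [h1, h0]

end aux

/-- the quotient set is finite with cardinality at most `2d - 2`. -/
theorem quotSet_finite (d : ℕ) (hd : 2 ≤ d) (w : Fin d → ℝ)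
    (hw0 : ext0 w 0 ≠ 0) (hwd : ext0 w (d - 1) ≠ 0) :
    (QuotSet d w).Finite ∧ (QuotSet d w).ncard ≤ 2 * d - 2 := by
  classical
  set P : Polynomial ℝ := ∑ j ∈ range d, Polynomial.C (ext0 w j) * Polynomial.X ^ j with hP
  have hcoeff : P.coeff (d - 1) = ext0 w (d - 1) := by
    rw [hP, Polynomial.finset_sum_coeff]
    simp only [Polynomial.coeff_C_mul, Polynomial.coeff_X_pow, mul_ite, mul_one, mul_zero]
    rw [Finset.sum_ite_eq (range d) (d - 1) (fun j => ext0 w j)]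
    rw [if_pos (mem_range.mpr (by omega))]
  have hPne : P ≠ 0 := by
    intro h
    apply hwd
    rw [← hcoeff, h, Polynomial.coeff_zero]
  have hdeg : P.natDegree ≤ d - 1 := by
    apply Polynomial.natDegree_sum_le_of_forall_le
    intro j hj
    refine le_trans (Polynomial.natDegree_C_mul_le _ _) ?_
    rw [Polynomial.natDegree_X_pow]
    rw [mem_range] at hj
    omega
  have heval : ∀ x : ℝ, P.eval x = ∑ j ∈ range d, ext0 w j * x ^ j := by
    intro x; rw [hP]; simp [Polynomial.eval_finset_sum]
  set f : ((Fin (d - 1) → ℝ) × ℝ) → ℝ := fun p => Real.cos p.2 / Real.sin p.2 with hf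
  have hmaps : ∀ p ∈ QuotSet d w, f p ∈ P.roots.toFinset := by
    intro p hp
    have hs := aux_sin_ne hd hwd hp
    simp only [Multiset.mem_toFinset, Polynomial.mem_roots hPne, Polynomial.IsRoot]
    rw [heval]
    exact aux_root hp hs
  have hinj : Set.InjOn f (QuotSet d w) := by
    intro p hp q hq hfpq
    have hsp := aux_sin_ne hd hwd hp
    have hsq := aux_sin_ne hd hwd hq
    have hcp := aux_cos_ne hd hw0 hp
    have hcq := aux_cos_ne hd hw0 hq
    simp only [hf] at hfpq
    rw [div_eq_div_iff hsp hsq] at hfpq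
    have hγ : p.2 = q.2 := by
      have h1 : Real.sin (p.2 - q.2) = 0 := by
        rw [Real.sin_sub]
        linear_combination -hfpq
      have h2 := (Real.sin_eq_zero_iff_of_lt_of_lt
        (by linarith [hp.1.1, hq.1.2] : -Real.pi < p.2 - q.2)
        (by linarith [hp.1.2, hq.1.1] : p.2 - q.2 < Real.pi)).mp h1
      linarith
    have hu : ∀ j, ext0 p.1 j = ext0 q.1 j := by
      intro j
      induction j using Nat.strong_induction_on with
      | _ j ih =>
        by_cases hj : j < d - 1
        · have h1 := hp.2 j (by omega)
          have h2 := hq.2 j (by omega)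
          rw [hγ] at h1
          have hm : extm p.1 j = extm q.1 j := by
            unfold extm
            by_cases hj0 : j = 0
            · simp [hj0]
            · rw [if_neg hj0, if_neg hj0]; exact ih (j - 1) (by omega)
          rw [hm] at h1
          have hmc : ext0 p.1 j * Real.cos q.2 = ext0 q.1 j * Real.cos q.2 := by
            linarith [h1.symm.trans h2]
          exact mul_right_cancel₀ hcq hmc
        · unfold ext0; rw [dif_neg hj, dif_neg hj]
    have hfst : p.1 = q.1 := by
      funext i
      have h := hu i
      unfold ext0 at h
      rw [dif_pos i.isLt, dif_pos i.isLt] at h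
      simpa using h
    exact Prod.ext hfst hγ
  have himg : f '' QuotSet d w ⊆ ↑P.roots.toFinset := by
    rintro x ⟨p, hp, rfl⟩; exact hmaps p hp
  have hfin : (QuotSet d w).Finite :=
    Set.Finite.of_finite_image ((P.roots.toFinset.finite_toSet).subset himg) hinj
  refine ⟨hfin, ?_⟩
  have h1 : (QuotSet d w).ncard = (f '' QuotSet d w).ncard :=
    (Set.ncard_image_of_injOn hinj).symm
  have h2 : (f '' QuotSet d w).ncard ≤ (↑P.roots.toFinset : Set ℝ).ncard :=
    Set.ncard_le_ncard himg (P.roots.toFinset.finite_toSet)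
  have h3 : (↑P.roots.toFinset : Set ℝ).ncard = P.roots.toFinset.card :=
    Set.ncard_coe_finset _
  have h4 : P.roots.toFinset.card ≤ P.natDegree :=
    le_trans (Multiset.toFinset_card_le _) P.card_roots'
  omega
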